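/- Let R_0 → R_1 → R_2 → ⋯ be a direct system of commutative rings with transition ring homomorphisms t_i : R_i → R_{i+1}, and suppose each t_i admits an R_i-linear splitting, i.e., an R_i-linear map σ_i : R_{i+1} → R_i with σ_i ∘ t_i = id. Then the natural ring map from R_0 to the colimit R_∞ = colim_i R_i admits an R_0-linear splitting σ : R_∞ → R_0, i.e., σ composed with the natural map R_0 → R_∞ is the identity of R_0. -/
import Mathlib


universe u

/-- Let `R_0 → R_1 → ⋯` be a direct system of commutative rings in
which every transition map `t_i` admits an `R_i`-linear splitting, and let `S` together
with compatible maps `φ_i : R_i → S` be the colimit of the system (expressed by the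
standard characterization: every element of `S` comes from some `R_i`, and two elements
of `R_i` are identified in `S` iff they are identified at some finite stage).  Then the
natural map `R_0 → S` admits an `R_0`-linear splitting `σ : S → R_0`. -/
theorem stmt6 (R : ℕ → Type u) [∀ i, CommRing (R i)]
    (t : ∀ i, R i →+* R (i + 1))
    (hsplit : ∀ i, ∃ σ : R (i + 1) →+ R i,
      (∀ (x : R i) (y : R (i + 1)), σ (t i x * y) = x * σ y) ∧ ∀ x : R i, σ (t i x) = x)
    (tIter : ∀ i k, R i →+* R (i + k))
    (htIter0 : ∀ i, tIter i 0 = RingHom.id (R i))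
    (htIterS : ∀ i k, tIter i (k + 1) = (t (i + k)).comp (tIter i k))
    (S : Type u) [CommRing S] (φ : ∀ i, R i →+* S)
    (hφ : ∀ i, (φ (i + 1)).comp (t i) = φ i)
    (hsurj : ∀ s : S, ∃ (i : ℕ) (x : R i), φ i x = s)
    (heq : ∀ (i : ℕ) (x y : R i), φ i x = φ i y ↔ ∃ k, tIter i k x = tIter i k y) :
    ∃ σ : S →+ R 0,
      (∀ (x : R 0) (s : S), σ (φ 0 x * s) = x * σ s) ∧ ∀ x : R 0, σ (φ 0 x) = x := by
  choose σs hσmul hσid using hsplit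
  -- iterated splitting F i : R i →+ R 0
  let F : ∀ i, R i →+ R 0 := fun i =>
    Nat.rec (AddMonoidHom.id (R 0)) (fun n ih => ih.comp (σs n)) i
  have hFS : ∀ i (x : R (i + 1)), F (i + 1) x = F i (σs i x) := fun i x => rfl
  -- iterated transition T i : R 0 →+* R i
  let T : ∀ i, R 0 →+* R i := fun i =>
    Nat.rec (RingHom.id (R 0)) (fun n ih => (t n).comp ih) i
  have hTS : ∀ i (x : R 0), T (i + 1) x = t i (T i x) := fun i x => rfl
  -- φ compatibility with tIter
  have hφIter : ∀ i k (x : R i), φ (i + k) (tIter i k x) = φ i x := by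
    intro i k
    induction k with
    | zero => intro x; rw [htIter0]; rfl
    | succ k ih =>
      intro x
      rw [htIterS]
      show φ (i + k + 1) (t (i + k) (tIter i k x)) = φ i x
      have h := RingHom.congr_fun (hφ (i + k)) (tIter i k x)
      exact h.trans (ih x)
  -- F collapses tIter
  have hBF : ∀ i k (x : R i), F (i + k) (tIter i k x) = F i x := by
    intro i k
    induction k with
    | zero => intro x; rw [htIter0]; rfl
    | succ k ih =>
      intro x
      rw [htIterS]
      show F (i + k) (σs (i + k) (t (i + k) (tIter i k x))) = F i x
      rw [hσid, ih]
  -- φ compatibility with T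
  have hφT : ∀ i (x : R 0), φ i (T i x) = φ 0 x := by
    intro i
    induction i with
    | zero => intro x; rfl
    | succ i ih =>
      intro x
      rw [hTS]
      have h : φ (i + 1) (t i (T i x)) = φ i (T i x) :=
        RingHom.congr_fun (hφ i) (T i x)
      exact h.trans (ih x)
  -- F is R0-linear against T
  have hFT : ∀ i (a : R 0) (y : R i), F i (T i a * y) = a * F i y := by
    intro i
    induction i with
    | zero => intro a y; rfl
    | succ i ih =>
      intro a y
      rw [hFS, hTS, hσmul, ih, hFS]
  have hFTid : ∀ i (a : R 0), F i (T i a) = a := by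
    intro i
    induction i with
    | zero => intro a; rfl
    | succ i ih =>
      intro a
      rw [hFS, hTS, hσid, ih]
  -- key well-definedness
  have key' : ∀ i k (x : R i) (y : R (i + k)), φ i x = φ (i + k) y → F i x = F (i + k) y := by
    intro i k x y h
    have h2 : φ (i + k) (tIter i k x) = φ (i + k) y := by rw [hφIter]; exact h
    obtain ⟨m, hm⟩ := (heq _ _ _).mp h2
    have h3 := congrArg (F (i + k + m)) hm
    rw [hBF (i + k) m, hBF (i + k) m, hBF i k] at h3
    exact h3
  have key : ∀ i j (x : R i) (y : R j), φ i x = φ j y → F i x = F j y := by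
    intro i j x y h
    rcases le_total i j with hij | hij
    · obtain ⟨k, rfl⟩ := Nat.le.dest hij
      exact key' i k x y h
    · obtain ⟨k, rfl⟩ := Nat.le.dest hij
      exact (key' j k y x h.symm).symm
  -- the underlying function
  let f : S → R 0 := fun s => F (hsurj s).choose (hsurj s).choose_spec.choose
  have hf : ∀ i (x : R i), f (φ i x) = F i x := by
    intro i x
    exact key _ _ _ _ (hsurj (φ i x)).choose_spec.choose_spec
  -- additivity helper at aligned levels
  have haddlvl : ∀ i k (x : R i) (y : R (i + k)),
      f (φ i x + φ (i + k) y) = F i x + F (i + k) y := by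
    intro i k x y
    have h1 : φ i x = φ (i + k) (tIter i k x) := (hφIter i k x).symm
    rw [h1, ← map_add, hf, map_add, hBF]
  have hadd : ∀ s1 s2 : S, f (s1 + s2) = f s1 + f s2 := by
    intro s1 s2
    obtain ⟨i, x, rfl⟩ := hsurj s1
    obtain ⟨j, y, rfl⟩ := hsurj s2
    rcases le_total i j with hij | hij
    · obtain ⟨k, rfl⟩ := Nat.le.dest hij
      rw [haddlvl, hf, hf]
    · obtain ⟨k, rfl⟩ := Nat.le.dest hij
      rw [add_comm ((φ (j + k)) x) ((φ j) y), haddlvl, hf, hf, add_comm]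
  refine ⟨AddMonoidHom.mk' f hadd, ?_, ?_⟩
  · intro x s
    obtain ⟨i, y, rfl⟩ := hsurj s
    have h1 : φ 0 x * φ i y = φ i (T i x * y) := by rw [map_mul, hφT]
    show f (φ 0 x * φ i y) = x * f (φ i y)
    rw [h1, hf, hFT, hf]
  · intro x
    show f (φ 0 x) = x
    rw [hf]
    exact hFTid 0 x
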